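/- arXiv:2308.06421 — 2 statements merged into one kernel-verified Lean document; each statement's English description precedes it below -/
import Mathlib

section
/- For a sequence u of the form u[n] = C(n+m, m) · a^n with |a| < |z|, the Z-transform Σ_{n=0}^∞ z^{-n} u[n] converges and equals z^{m+1}/(z - a)^{m+1}. -/
/-- Z-transform of `C(n+m, m) * a^n` is `z^(m+1)/(z-a)^(m+1)` for `|a| < |z|`. -/
theorem stmt_2 (a z : ℂ) (m : ℕ) (h : ‖a‖ < ‖z‖) :
    HasSum (fun n : ℕ => (z⁻¹) ^ n * (((n + m).choose m : ℂ) * a ^ n))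
      (z ^ (m + 1) / (z - a) ^ (m + 1)) := by
  have hz : z ≠ 0 := by
    intro hz; rw [hz, norm_zero] at h; exact absurd (norm_nonneg a) (not_le.2 h)
  have hr : ‖a / z‖ < 1 := by
    rw [norm_div, div_lt_one (lt_of_le_of_lt (norm_nonneg a) h)]; exact h
  have H := hasSum_choose_mul_geometric_of_norm_lt_one m hr
  have hza : z - a ≠ 0 := by
    intro hz0
    have : z = a := by linear_combination hz0
    rw [this] at h; exact lt_irrefl _ h
  convert H using 1
  · rfl
  · funext n
    field_simp
    rw [div_pow, div_pow]; ring
  · have h1 : (1 : ℂ) - a / z = (z - a) / z := by field_simp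
    rw [h1, div_pow, one_div, inv_div]
end

section
/- Characterisation of vanishing coefficients at a root via gcd: let u be an order-k linear recurrence sequence with Z-transform ψ(z)/χ_c(z), and let λ be a root of χ_c with multiplicity m. Then all coefficients b_0,...,b_{m-1} attached to λ in the exponential-polynomial closed form vanish if and only if (z-λ)^m divides gcd(ψ, χ_c); equivalently, at least one b_j is nonzero if and only if (z-λ) divides χ_c / gcd(ψ, χ_c). -/
open Polynomial Finset

/-- Vanishing of the coefficients attached to a root `λ` of multiplicity `m`,
characterised via the gcd of the Z-transform numerator with `χ_c`. -/
theorem stmt_14 (k m : ℕ) (hm : 1 ≤ m) (lam : ℂ) (hlam : lam ≠ 0)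
    (χ ψ q p : Polynomial ℂ) (hχ : χ.Monic) (hdeg : χ.natDegree = k)
    (hψdeg : ψ.natDegree ≤ k)
    (hfac : χ = (X - C lam) ^ m * q) (hq : q.eval lam ≠ 0)
    (b : ℕ → ℂ)
    (hpf : ψ = q * (∑ j ∈ Finset.range m, C (b j) * X ^ (j + 1) * (X - C lam) ^ (m - 1 - j))
      + p * (X - C lam) ^ m) :
    ((∀ j < m, b j = 0) ↔ (X - C lam) ^ m ∣ EuclideanDomain.gcd ψ χ) ∧
    ((∃ j < m, b j ≠ 0) ↔ (X - C lam) ∣ χ / EuclideanDomain.gcd ψ χ) := by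
  classical
  set S : Polynomial ℂ :=
    ∑ j ∈ Finset.range m, C (b j) * X ^ (j + 1) * (X - C lam) ^ (m - 1 - j) with hS
  have hq0 : q ≠ 0 := fun h => hq (by simp [h])
  have hχ0 : χ ≠ 0 := hχ.ne_zero
  have hqmult : rootMultiplicity lam q = 0 :=
    rootMultiplicity_eq_zero hq
  -- Key: vanishing of all b_j ↔ (X - λ)^m ∣ ψ
  have key : (∀ j < m, b j = 0) ↔ (X - C lam) ^ m ∣ ψ := by
    constructor
    · intro h
      have hS0 : S = 0 := by
        apply Finset.sum_eq_zero
        intro j hj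
        simp [h j (Finset.mem_range.mp hj)]
      rw [hpf, hS0, mul_zero, zero_add]
      exact Dvd.intro p (mul_comm _ _)
    · intro hdvd
      by_contra hne
      push_neg at hne
      obtain ⟨i, him, hbi⟩ := hne
      -- largest index with nonzero coefficient
      set j0 : ℕ := Nat.findGreatest (fun j => b j ≠ 0) (m - 1) with hj0
      have hile : i ≤ m - 1 := by omega
      have hbj0 : b j0 ≠ 0 := Nat.findGreatest_spec (P := fun j => b j ≠ 0) hile hbi
      have hj0le : j0 ≤ m - 1 := Nat.findGreatest_le _
      have hgreat : ∀ j, j0 < j → j ≤ m - 1 → b j = 0 := by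
        intro j h1 h2
        by_contra hb
        exact (Nat.findGreatest_is_greatest h1 h2) hb
      -- restrict the sum
      have hSrestrict : S = ∑ j ∈ Finset.range (j0 + 1),
          C (b j) * X ^ (j + 1) * (X - C lam) ^ (m - 1 - j) := by
        rw [hS]
        symm
        apply Finset.sum_subset
        · intro x hx
          simp only [Finset.mem_range] at hx ⊢
          omega
        · intro x hx hnx
          simp only [Finset.mem_range] at hx hnx
          rw [hgreat x (by omega) (by omega)]
          simp
      set T : Polynomial ℂ :=
        ∑ j ∈ Finset.range (j0 + 1), C (b j) * X ^ (j + 1) * (X - C lam) ^ (j0 - j) with hT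
      have hST : S = (X - C lam) ^ (m - 1 - j0) * T := by
        rw [hSrestrict, hT, Finset.mul_sum]
        apply Finset.sum_congr rfl
        intro j hj
        simp only [Finset.mem_range] at hj
        have : m - 1 - j = (m - 1 - j0) + (j0 - j) := by omega
        rw [this, pow_add]
        ring
      have hTeval : T.eval lam = b j0 * lam ^ (j0 + 1) := by
        rw [hT]
        rw [eval_finset_sum]
        rw [Finset.sum_eq_single j0]
        · simp
        · intro j hj hjne
          simp only [Finset.mem_range] at hj
          have : j0 - j ≠ 0 := by omega
          simp [eval_pow, sub_self, zero_pow this]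
        · intro h
          exact absurd (Finset.self_mem_range_succ j0) h
      have hTne : T.eval lam ≠ 0 := by
        rw [hTeval]
        exact mul_ne_zero hbj0 (pow_ne_zero _ hlam)
      have hT0 : T ≠ 0 := fun h => hTne (by simp [h])
      have hTmult : rootMultiplicity lam T = 0 := rootMultiplicity_eq_zero hTne
      have hS0 : S ≠ 0 := by
        rw [hST]
        exact mul_ne_zero (pow_ne_zero _ (X_sub_C_ne_zero lam)) hT0
      have hSmult : rootMultiplicity lam S = m - 1 - j0 := by
        rw [hST, rootMultiplicity_mul (mul_ne_zero (pow_ne_zero _ (X_sub_C_ne_zero lam)) hT0),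
          rootMultiplicity_X_sub_C_pow, hTmult, add_zero]
      -- (X - λ)^m divides q * S
      have hdvdqS : (X - C lam) ^ m ∣ q * S := by
        have h1 : (X - C lam) ^ m ∣ p * (X - C lam) ^ m := Dvd.intro p (mul_comm _ _)
        have := dvd_sub hdvd h1
        rw [hpf] at this
        simpa using this
      have hqS0 : q * S ≠ 0 := mul_ne_zero hq0 hS0
      have hle : m ≤ rootMultiplicity lam (q * S) :=
        (le_rootMultiplicity_iff hqS0).mpr hdvdqS
      rw [rootMultiplicity_mul hqS0, hqmult, zero_add, hSmult] at hle
      omega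
  set g : Polynomial ℂ := EuclideanDomain.gcd ψ χ with hg
  have hgdvdχ : g ∣ χ := EuclideanDomain.gcd_dvd_right ψ χ
  have hg0 : g ≠ 0 := by
    intro h
    exact hχ0 (zero_dvd_iff.mp (h ▸ hgdvdχ))
  have hχmult : rootMultiplicity lam χ = m := by
    rw [hfac, rootMultiplicity_mul (hfac ▸ hχ0),
      rootMultiplicity_X_sub_C_pow, hqmult, add_zero]
  -- first part: gcd version
  have part1 : (∀ j < m, b j = 0) ↔ (X - C lam) ^ m ∣ g := by
    rw [key]
    constructor
    · intro h
      exact EuclideanDomain.dvd_gcd h (hfac ▸ dvd_mul_right _ _)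
    · intro h
      exact h.trans (EuclideanDomain.gcd_dvd_left ψ χ)
  refine ⟨part1, ?_⟩
  -- second part
  have hχdiv : χ = g * (χ / g) := (EuclideanDomain.mul_div_cancel' hg0 hgdvdχ).symm
  have hχg0 : χ / g ≠ 0 := by
    intro h
    rw [h, mul_zero] at hχdiv
    exact hχ0 hχdiv
  have hmultsum : rootMultiplicity lam g + rootMultiplicity lam (χ / g) = m := by
    rw [← hχmult]
    conv_rhs => rw [hχdiv]
    rw [rootMultiplicity_mul (hχdiv ▸ hχ0)]
  have h2 : (X - C lam) ∣ χ / g ↔ 1 ≤ rootMultiplicity lam (χ / g) := by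
    rw [le_rootMultiplicity_iff hχg0, pow_one]
  have h3 : (X - C lam) ^ m ∣ g ↔ m ≤ rootMultiplicity lam g :=
    (le_rootMultiplicity_iff hg0).symm
  constructor
  · intro ⟨j, hj, hb⟩
    rw [h2]
    by_contra hc
    push_neg at hc
    have : rootMultiplicity lam (χ / g) = 0 := by omega
    have : m ≤ rootMultiplicity lam g := by omega
    exact hb (part1.mpr (h3.mpr this) j hj)
  · intro hdvd
    by_contra hc
    push_neg at hc
    have := h3.mp (part1.mp hc)
    have h1 := h2.mp hdvd
    omega
end
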